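/- arXiv:2503.11975 — 2 statements merged into one kernel-verified Lean document; each statement's English description precedes it below -/
import Mathlib

section
/- Let δ > 0 and let B be an m × m positive real matrix that is δ-bounded, i.e., for all i, j, k, B_{ij} ≤ δ·B_{ik} and B_{ij} ≤ δ·B_{kj}. For each i ∈ ℕ let U_i be a nonnegative m × m matrix. Then the intersection ⋂_{i=1}^∞ B U_1 B U_2 B ⋯ B U_i B (Λ^m), where Λ^m is the nonnegative cone of ℝ^m, is contained in a single ray, i.e., any two nonzero elements u, v of this intersection satisfy u = λv for some λ > 0. -/
open Finset Filter

/-- The iterated matrix product `B U_0 B U_1 B ⋯ B U_{n-1} B`: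
`veechProd B U 0 = B` and `veechProd B U (n+1) = (veechProd B U n) * U n * B`. -/
def veechProd {m : ℕ} (B : Matrix (Fin m) (Fin m) ℝ)
    (U : ℕ → Matrix (Fin m) (Fin m) ℝ) : ℕ → Matrix (Fin m) (Fin m) ℝ
  | 0 => B
  | n + 1 => veechProd B U n * U n * B

namespace VeechAux

variable {m : ℕ}

lemma mulVec_apply (B : Matrix (Fin m) (Fin m) ℝ) (z : Fin m → ℝ) (i : Fin m) :
    B.mulVec z i = ∑ j, B i j * z j := rfl

lemma mulVec_pos {B : Matrix (Fin m) (Fin m) ℝ} (hBpos : ∀ i j, 0 < B i j)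
    {z : Fin m → ℝ} (hz : ∀ j, 0 ≤ z j) (hz0 : z ≠ 0) (i : Fin m) :
    0 < B.mulVec z i := by
  obtain ⟨j0, hj0⟩ : ∃ j, 0 < z j := by
    by_contra h; push_neg at h
    exact hz0 (funext fun j => le_antisymm (h j) (hz j))
  rw [mulVec_apply]
  exact Finset.sum_pos' (fun j _ => mul_nonneg (hBpos i j).le (hz j))
    ⟨j0, Finset.mem_univ _, mul_pos (hBpos i j0) hj0⟩

lemma mulVec_nonneg {B : Matrix (Fin m) (Fin m) ℝ} (hB : ∀ i j, 0 ≤ B i j)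
    {z : Fin m → ℝ} (hz : ∀ j, 0 ≤ z j) (i : Fin m) : 0 ≤ B.mulVec z i := by
  rw [mulVec_apply]; exact Finset.sum_nonneg fun j _ => mul_nonneg (hB i j) (hz j)

lemma mulVec_le_mulVec {B : Matrix (Fin m) (Fin m) ℝ} (hB : ∀ i j, 0 ≤ B i j)
    {x y : Fin m → ℝ} (h : ∀ j, x j ≤ y j) (i : Fin m) :
    B.mulVec x i ≤ B.mulVec y i := by
  rw [mulVec_apply, mulVec_apply]
  exact Finset.sum_le_sum fun j _ => mul_le_mul_of_nonneg_left (h j) (hB i j)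

lemma const_mul_mulVec (B : Matrix (Fin m) (Fin m) ℝ) (a : ℝ) (z : Fin m → ℝ) (i : Fin m) :
    a * B.mulVec z i = B.mulVec (fun j => a * z j) i := by
  rw [mulVec_apply, mulVec_apply, Finset.mul_sum]
  exact Finset.sum_congr rfl fun j _ => by ring

lemma row_bound {δ : ℝ} {B : Matrix (Fin m) (Fin m) ℝ}
    (hBbound : ∀ i j k, B i j ≤ δ * B i k ∧ B i j ≤ δ * B k j)
    {z : Fin m → ℝ} (hz : ∀ j, 0 ≤ z j) (i k : Fin m) :
    B.mulVec z i ≤ δ * B.mulVec z k := by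
  rw [mulVec_apply, mulVec_apply, Finset.mul_sum]
  exact Finset.sum_le_sum fun j _ => by
    have h1 := (hBbound i j k).2
    nlinarith [hz j, mul_le_mul_of_nonneg_right h1 (hz j)]

lemma sub_expand {B : Matrix (Fin m) (Fin m) ℝ} (z z' : Fin m → ℝ) (b : ℝ) (l : Fin m) :
    B.mulVec z l - b * B.mulVec z' l = ∑ j, B l j * (z j - b * z' j) := by
  rw [mulVec_apply, mulVec_apply, Finset.mul_sum, ← Finset.sum_sub_distrib]
  exact Finset.sum_congr rfl fun j _ => by ring

/-- upper comparison: with `z ≤ b z'`, `δ (Bz - b Bz')ᵢ ≤ (Bz - b Bz')ₖ`. -/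
lemma sum_upper {δ : ℝ} {B : Matrix (Fin m) (Fin m) ℝ}
    (hBbound : ∀ i j k, B i j ≤ δ * B i k ∧ B i j ≤ δ * B k j)
    {z z' : Fin m → ℝ} {b : ℝ} (H2 : ∀ j, z j ≤ b * z' j) (i k : Fin m) :
    δ * (B.mulVec z i - b * B.mulVec z' i) ≤ B.mulVec z k - b * B.mulVec z' k := by
  rw [sub_expand, sub_expand, Finset.mul_sum]
  refine Finset.sum_le_sum fun j _ => ?_
  have h1 := (hBbound k j i).2
  have h2 : z j - b * z' j ≤ 0 := by linarith [H2 j]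
  nlinarith [mul_le_mul_of_nonpos_right h1 h2]

/-- lower comparison: with `a z' ≤ z`, `(Bz - a Bz')ᵢ ≤ δ (Bz - a Bz')ₖ`. -/
lemma sum_lower {δ : ℝ} {B : Matrix (Fin m) (Fin m) ℝ}
    (hBbound : ∀ i j k, B i j ≤ δ * B i k ∧ B i j ≤ δ * B k j)
    {z z' : Fin m → ℝ} {a : ℝ} (H1 : ∀ j, a * z' j ≤ z j) (i k : Fin m) :
    B.mulVec z i - a * B.mulVec z' i ≤ δ * (B.mulVec z k - a * B.mulVec z' k) := by
  rw [sub_expand, sub_expand, Finset.mul_sum]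
  refine Finset.sum_le_sum fun j _ => ?_
  have h1 := (hBbound i j k).2
  have h2 : 0 ≤ z j - a * z' j := by linarith [H1 j]
  nlinarith [mul_le_mul_of_nonneg_right h1 h2]

/-- One contraction step through `B`. -/
lemma step {δ : ℝ} {B : Matrix (Fin m) (Fin m) ℝ} (hδ : 0 < δ)
    (hBpos : ∀ i j, 0 < B i j)
    (hBbound : ∀ i j k, B i j ≤ δ * B i k ∧ B i j ≤ δ * B k j)
    {z z' : Fin m → ℝ} (hz' : ∀ j, 0 ≤ z' j) (hz'0 : z' ≠ 0)
    {a b : ℝ} (ha : 0 < a)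
    (H1 : ∀ j, a * z' j ≤ z j) (H2 : ∀ j, z j ≤ b * z' j) :
    ∃ a' b' : ℝ, a ≤ a' ∧ 0 < a' ∧
      (∀ i, 0 < B.mulVec z' i) ∧
      (∀ i, a' * B.mulVec z' i ≤ B.mulVec z i) ∧
      (∀ i, B.mulVec z i ≤ b' * B.mulVec z' i) ∧
      b' - a' ≤ (δ^2 - 1) / (δ^2 + 1) * (b - a) := by
  have hw'pos : ∀ i, 0 < B.mulVec z' i := mulVec_pos hBpos hz' hz'0
  have hne : Nonempty (Fin m) := by
    obtain ⟨j, -⟩ := Function.ne_iff.mp hz'0; exact ⟨j⟩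
  have hun : (univ : Finset (Fin m)).Nonempty := univ_nonempty
  have hlow : ∀ i, a * B.mulVec z' i ≤ B.mulVec z i := by
    intro i
    rw [const_mul_mulVec]
    exact mulVec_le_mulVec (fun i j => (hBpos i j).le) H1 i
  have hupp : ∀ i, B.mulVec z i ≤ b * B.mulVec z' i := by
    intro i
    rw [const_mul_mulVec]
    exact mulVec_le_mulVec (fun i j => (hBpos i j).le) H2 i
  set w := B.mulVec z with hw
  set w' := B.mulVec z' with hw'd
  set r : Fin m → ℝ := fun i => w i / w' i with hr
  obtain ⟨i0, -, hi0⟩ := Finset.exists_mem_eq_sup' hun r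
  obtain ⟨k0, -, hk0⟩ := Finset.exists_mem_eq_inf' hun r
  have hmin : ∀ i, r k0 ≤ r i := fun i => hk0 ▸ Finset.inf'_le r (Finset.mem_univ i)
  have hmax : ∀ i, r i ≤ r i0 := fun i => hi0 ▸ Finset.le_sup' r (Finset.mem_univ i)
  have hrw : ∀ i, r i * w' i = w i := fun i => div_mul_cancel₀ _ (hw'pos i).ne'
  have hra : ∀ i, a ≤ r i := by
    intro i
    rw [hr, le_div_iff₀ (hw'pos i)]
    exact hlow i
  have hrb : ∀ i, r i ≤ b := by
    intro i
    rw [hr, div_le_iff₀ (hw'pos i)]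
    exact hupp i
  have hp := hw'pos i0
  have hq := hw'pos k0
  have esub : ∀ (t : ℝ) (i : Fin m), r i - t = (w i - t * w' i) / w' i := by
    intro t i
    rw [sub_div, mul_div_assoc, div_self (hw'pos i).ne', mul_one]
  -- core inequality 1 : δ² (r i0 - b) ≤ r k0 - b
  have c1 : δ^2 * (r i0 - b) ≤ r k0 - b := by
    have s1 : δ * (w i0 - b * w' i0) ≤ w k0 - b * w' k0 := sum_upper hBbound H2 i0 k0
    have s2 : w' i0 ≤ δ * w' k0 := row_bound hBbound hz' i0 k0
    have s3 : w k0 - b * w' k0 ≤ 0 := by linarith [hupp k0]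
    rw [esub, esub, mul_div_assoc', div_le_div_iff₀ hp hq]
    nlinarith [mul_le_mul_of_nonneg_right s1 (by positivity : (0:ℝ) ≤ δ * w' k0),
      mul_le_mul_of_nonpos_left s2 s3]
  -- core inequality 2 : r i0 - a ≤ δ² (r k0 - a)
  have c2 : r i0 - a ≤ δ^2 * (r k0 - a) := by
    have s1 : w i0 - a * w' i0 ≤ δ * (w k0 - a * w' k0) := sum_lower hBbound H1 i0 k0
    have s2 : w' k0 ≤ δ * w' i0 := row_bound hBbound hz' k0 i0
    have s3 : 0 ≤ w k0 - a * w' k0 := by linarith [hlow k0]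
    rw [esub, esub, mul_div_assoc', div_le_div_iff₀ hp hq]
    nlinarith [mul_le_mul_of_nonneg_right s1 hq.le,
      mul_le_mul_of_nonneg_left s2 (by positivity : (0:ℝ) ≤ δ * (w k0 - a * w' k0))]
  refine ⟨r k0, r i0, hra k0, lt_of_lt_of_le ha (hra k0), hw'pos, ?_, ?_, ?_⟩
  · intro i
    calc r k0 * w' i ≤ r i * w' i := mul_le_mul_of_nonneg_right (hmin i) (hw'pos i).le
      _ = w i := hrw i
  · intro i
    calc w i = r i * w' i := (hrw i).symm
      _ ≤ r i0 * w' i := mul_le_mul_of_nonneg_right (hmax i) (hw'pos i).le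
  · rw [div_mul_eq_mul_div, le_div_iff₀ (by positivity : (0:ℝ) < δ^2 + 1)]
    nlinarith [c1, c2]

/-- Base estimate : for nonzero nonnegative `z, z'`, the ratios of `Bz` to `Bz'`
lie within a factor `δ²`. -/
lemma base {δ : ℝ} {B : Matrix (Fin m) (Fin m) ℝ} (hδ : 0 < δ)
    (hBpos : ∀ i j, 0 < B i j)
    (hBbound : ∀ i j k, B i j ≤ δ * B i k ∧ B i j ≤ δ * B k j)
    {z z' : Fin m → ℝ} (hz : ∀ j, 0 ≤ z j) (hz' : ∀ j, 0 ≤ z' j)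
    (hz0 : z ≠ 0) (hz'0 : z' ≠ 0) :
    ∃ a b : ℝ, 0 < a ∧
      (∀ i, 0 < B.mulVec z' i) ∧
      (∀ i, a * B.mulVec z' i ≤ B.mulVec z i) ∧
      (∀ i, B.mulVec z i ≤ b * B.mulVec z' i) ∧
      b - a ≤ (δ^2 - 1) * a := by
  have hw'pos : ∀ i, 0 < B.mulVec z' i := mulVec_pos hBpos hz' hz'0
  have hwpos : ∀ i, 0 < B.mulVec z i := mulVec_pos hBpos hz hz0
  have hne : Nonempty (Fin m) := by
    obtain ⟨j, -⟩ := Function.ne_iff.mp hz'0; exact ⟨j⟩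
  have hun : (univ : Finset (Fin m)).Nonempty := univ_nonempty
  set w := B.mulVec z with hw
  set w' := B.mulVec z' with hw'd
  set r : Fin m → ℝ := fun i => w i / w' i with hr
  obtain ⟨i0, -, hi0⟩ := Finset.exists_mem_eq_sup' hun r
  obtain ⟨k0, -, hk0⟩ := Finset.exists_mem_eq_inf' hun r
  have hmin : ∀ i, r k0 ≤ r i := fun i => hk0 ▸ Finset.inf'_le r (Finset.mem_univ i)
  have hmax : ∀ i, r i ≤ r i0 := fun i => hi0 ▸ Finset.le_sup' r (Finset.mem_univ i)
  have hrw : ∀ i, r i * w' i = w i := fun i => div_mul_cancel₀ _ (hw'pos i).ne'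
  have hq := hw'pos k0
  have hp := hw'pos i0
  have hk0pos : 0 < r k0 := div_pos (hwpos k0) hq
  refine ⟨r k0, r i0, hk0pos, hw'pos, ?_, ?_, ?_⟩
  · intro i
    calc r k0 * w' i ≤ r i * w' i := mul_le_mul_of_nonneg_right (hmin i) (hw'pos i).le
      _ = w i := hrw i
  · intro i
    calc w i = r i * w' i := (hrw i).symm
      _ ≤ r i0 * w' i := mul_le_mul_of_nonneg_right (hmax i) (hw'pos i).le
  · have s1 : w i0 ≤ δ * w k0 := row_bound hBbound hz i0 k0
    have s2 : w' k0 ≤ δ * w' i0 := row_bound hBbound hz' k0 i0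
    have key : r i0 ≤ δ^2 * r k0 := by
      rw [hr, mul_div_assoc', div_le_div_iff₀ hp hq]
      nlinarith [mul_le_mul s1 s2 (hw'pos k0).le (mul_nonneg hδ.le (hwpos k0).le)]
    nlinarith [hk0pos]

lemma veechProd_shift (B : Matrix (Fin m) (Fin m) ℝ)
    (U : ℕ → Matrix (Fin m) (Fin m) ℝ) (n : ℕ) :
    veechProd B U (n + 1) = B * U 0 * veechProd B (fun k => U (k + 1)) n := by
  induction n with
  | zero => simp [veechProd]
  | succ n ih =>
    rw [show veechProd B U (n + 1 + 1) = veechProd B U (n + 1) * U (n + 1) * B from rfl, ih,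
      show veechProd B (fun k => U (k + 1)) (n + 1)
        = veechProd B (fun k => U (k + 1)) n * U (n + 1) * B from rfl]
    simp only [mul_assoc]

lemma veechProd_mulVec_succ (B : Matrix (Fin m) (Fin m) ℝ)
    (U : ℕ → Matrix (Fin m) (Fin m) ℝ) (n : ℕ) (x : Fin m → ℝ) :
    (veechProd B U (n + 1)).mulVec x
      = B.mulVec ((U 0).mulVec ((veechProd B (fun k => U (k + 1)) n).mulVec x)) := by
  rw [veechProd_shift, ← Matrix.mulVec_mulVec, ← Matrix.mulVec_mulVec]

/-- The main inductive claim: images of the nonnegative cone under `veechProd`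
have ratio oscillation at most `((δ²-1)/(δ²+1))^n (δ²-1) a`. -/
lemma claim {δ : ℝ} {B : Matrix (Fin m) (Fin m) ℝ} (hδ : 0 < δ) (hδ1 : 1 ≤ δ)
    (hBpos : ∀ i j, 0 < B i j)
    (hBbound : ∀ i j k, B i j ≤ δ * B i k ∧ B i j ≤ δ * B k j) :
    ∀ (n : ℕ) (U : ℕ → Matrix (Fin m) (Fin m) ℝ), (∀ k i j, 0 ≤ U k i j) →
    ∀ (z z' : Fin m → ℝ), (∀ j, 0 ≤ z j) → (∀ j, 0 ≤ z' j) →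
    (veechProd B U n).mulVec z ≠ 0 → (veechProd B U n).mulVec z' ≠ 0 →
    ∃ a b : ℝ, 0 < a ∧ (∀ i, 0 < (veechProd B U n).mulVec z' i) ∧
      (∀ i, a * (veechProd B U n).mulVec z' i ≤ (veechProd B U n).mulVec z i) ∧
      (∀ i, (veechProd B U n).mulVec z i ≤ b * (veechProd B U n).mulVec z' i) ∧
      b - a ≤ ((δ^2 - 1)/(δ^2 + 1))^n * ((δ^2 - 1) * a) := by
  intro n
  induction n with
  | zero =>
    intro U hU z z' hz hz' hwz hwz'
    have hz0 : z ≠ 0 := by rintro rfl; exact hwz (Matrix.mulVec_zero _)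
    have hz'0 : z' ≠ 0 := by rintro rfl; exact hwz' (Matrix.mulVec_zero _)
    obtain ⟨a, b, ha, hpos, hl, hu2, hc⟩ := base hδ hBpos hBbound hz hz' hz0 hz'0
    exact ⟨a, b, ha, hpos, hl, hu2, by simpa using hc⟩
  | succ n ih =>
    intro U hU z z' hz hz' hwz hwz'
    have hre := veechProd_mulVec_succ B U n
    set U' : ℕ → Matrix (Fin m) (Fin m) ℝ := fun k => U (k + 1) with hU'def
    set P := veechProd B U' n with hP
    set w1 := P.mulVec z with hw1def
    set w1' := P.mulVec z' with hw1'def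
    have hw1 : w1 ≠ 0 := by
      intro h
      apply hwz
      rw [hre, ← hw1def, h, Matrix.mulVec_zero, Matrix.mulVec_zero]
    have hw1' : w1' ≠ 0 := by
      intro h
      apply hwz'
      rw [hre, ← hw1'def, h, Matrix.mulVec_zero, Matrix.mulVec_zero]
    obtain ⟨a, b, ha, hpos, hl, hu2, hc⟩ := ih U' (fun k i j => hU (k+1) i j) z z' hz hz' hw1 hw1'
    set z2 := (U 0).mulVec w1 with hz2def
    set z2' := (U 0).mulVec w1' with hz2'def
    have hz2' : ∀ j, 0 ≤ z2' j := fun j => mulVec_nonneg (hU 0) (fun l => (hpos l).le) j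
    have hz2'0 : z2' ≠ 0 := by
      intro h
      apply hwz'
      rw [hre, ← hw1'def, ← hz2'def, h, Matrix.mulVec_zero]
    have H1 : ∀ j, a * z2' j ≤ z2 j := by
      intro j
      rw [hz2def, hz2'def, const_mul_mulVec]
      exact mulVec_le_mulVec (hU 0) hl j
    have H2 : ∀ j, z2 j ≤ b * z2' j := by
      intro j
      rw [hz2def, hz2'def, const_mul_mulVec]
      exact mulVec_le_mulVec (hU 0) hu2 j
    obtain ⟨a', b', haa, ha', hw'pos, hl', hu', hcon⟩ :=
      step hδ hBpos hBbound hz2' hz2'0 ha H1 H2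
    have hcn : 0 ≤ (δ^2 - 1)/(δ^2 + 1) := by
      apply div_nonneg
      · nlinarith
      · positivity
    refine ⟨a', b', ha', ?_, ?_, ?_, ?_⟩
    · intro i
      rw [hre]
      exact hw'pos i
    · intro i
      rw [hre, hre]
      exact hl' i
    · intro i
      rw [hre, hre]
      exact hu' i
    · have h1 : b' - a' ≤ (δ^2 - 1)/(δ^2 + 1) * (((δ^2 - 1)/(δ^2 + 1))^n * ((δ^2 - 1) * a)) :=
        le_trans hcon (mul_le_mul_of_nonneg_left hc hcn)
      have h2 : ((δ^2 - 1)/(δ^2 + 1)) * (((δ^2 - 1)/(δ^2 + 1))^n * ((δ^2 - 1) * a))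
          ≤ ((δ^2 - 1)/(δ^2 + 1))^(n+1) * ((δ^2 - 1) * a') := by
        have hd1 : (0:ℝ) ≤ δ^2 - 1 := by nlinarith
        calc ((δ^2 - 1)/(δ^2 + 1)) * (((δ^2 - 1)/(δ^2 + 1))^n * ((δ^2 - 1) * a))
            = ((δ^2 - 1)/(δ^2 + 1))^(n+1) * ((δ^2 - 1) * a) := by ring
          _ ≤ ((δ^2 - 1)/(δ^2 + 1))^(n+1) * ((δ^2 - 1) * a') :=
              mul_le_mul_of_nonneg_left (mul_le_mul_of_nonneg_left haa hd1)
                (pow_nonneg hcn (n+1))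
      linarith

end VeechAux

/-- **Veech's lemma.** Let `δ > 0` and let `B` be an `m × m`
positive real matrix that is `δ`-bounded, i.e. `B_{ij} ≤ δ·B_{ik}` and
`B_{ij} ≤ δ·B_{kj}` for all `i, j, k`.  For each `i` let `U_i` be a
nonnegative `m × m` matrix.  Then the intersection
`⋂_i B U_1 B U_2 ⋯ B U_i B (Λ^m)`, where `Λ^m` is the nonnegative cone of
`ℝ^m`, is contained in a single ray: any two nonzero elements `u, v` of this
intersection satisfy `u = λ • v` for some `λ > 0`. -/
theorem veech_intersection_single_ray (m : ℕ) (δ : ℝ) (hδ : 0 < δ)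
    (B : Matrix (Fin m) (Fin m) ℝ)
    (hBpos : ∀ i j, 0 < B i j)
    (hBbound : ∀ i j k, B i j ≤ δ * B i k ∧ B i j ≤ δ * B k j)
    (U : ℕ → Matrix (Fin m) (Fin m) ℝ)
    (hU : ∀ n i j, 0 ≤ U n i j) :
    ∀ u ∈ ⋂ n : ℕ, (veechProd B U n).mulVec ''
        {x : Fin m → ℝ | ∀ i, 0 ≤ x i},
      ∀ v ∈ ⋂ n : ℕ, (veechProd B U n).mulVec ''
          {x : Fin m → ℝ | ∀ i, 0 ≤ x i},
        u ≠ 0 → v ≠ 0 → ∃ lam : ℝ, 0 < lam ∧ u = lam • v := by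
  intro u hu v hv hu0 hv0
  rcases Nat.eq_zero_or_pos m with hm | hm
  · exfalso
    apply hu0
    funext i
    exact absurd i.isLt (by omega)
  set i0 : Fin m := ⟨0, hm⟩ with hi0def
  have hδ1 : 1 ≤ δ := by
    have h1 := hBpos i0 i0
    have h2 := (hBbound i0 i0 i0).1
    nlinarith
  rw [Set.mem_iInter] at hu hv
  -- u and v are strictly positive (being in the image of B at level 0)
  obtain ⟨y, hy, hyv⟩ := hv 0
  have hy0 : y ≠ 0 := by
    rintro rfl
    exact hv0 (hyv ▸ Matrix.mulVec_zero _)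
  have hvpos : ∀ i, 0 < v i := by
    intro i
    rw [← hyv]
    exact VeechAux.mulVec_pos hBpos hy hy0 i
  obtain ⟨x0, hx0, hx0u⟩ := hu 0
  have hx00 : x0 ≠ 0 := by
    rintro rfl
    exact hu0 (hx0u ▸ Matrix.mulVec_zero _)
  have hupos : ∀ i, 0 < u i := by
    intro i
    rw [← hx0u]
    exact VeechAux.mulVec_pos hBpos hx0 hx00 i
  set c : ℝ := (δ^2 - 1)/(δ^2 + 1) with hcdef
  have hc0 : 0 ≤ c := by
    apply div_nonneg
    · nlinarith
    · positivity
  have hc1 : c < 1 := by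
    rw [hcdef, div_lt_one (by positivity)]
    nlinarith
  set ρ : ℝ := u i0 / v i0 with hρdef
  have hρpos : 0 < ρ := div_pos (hupos i0) (hvpos i0)
  refine ⟨ρ, hρpos, ?_⟩
  funext i
  show u i = ρ * v i
  have key : ∀ n : ℕ, |u i - ρ * v i| ≤ c^n * ((δ^2 - 1) * ρ * v i) := by
    intro n
    obtain ⟨x, hx, hxu⟩ := hu n
    obtain ⟨y', hy', hy'v⟩ := hv n
    have hwx : (veechProd B U n).mulVec x ≠ 0 := by rw [hxu]; exact hu0
    have hwy : (veechProd B U n).mulVec y' ≠ 0 := by rw [hy'v]; exact hv0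
    obtain ⟨a, b, ha, hpos, hl, hub, hcn⟩ :=
      VeechAux.claim hδ hδ1 hBpos hBbound n U hU x y' hx hy' hwx hwy
    rw [hxu, hy'v] at hl hub
    have haρ : a ≤ ρ := by
      rw [hρdef, le_div_iff₀ (hvpos i0)]
      exact hl i0
    have hρb : ρ ≤ b := by
      rw [hρdef, div_le_iff₀ (hvpos i0)]
      exact hub i0
    have h1 : u i - ρ * v i ≤ (b - a) * v i := by
      nlinarith [hub i, mul_le_mul_of_nonneg_right haρ (hvpos i).le]
    have h2 : ρ * v i - u i ≤ (b - a) * v i := by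
      nlinarith [hl i, mul_le_mul_of_nonneg_right hρb (hvpos i).le]
    have h3 : (b - a) * v i ≤ c^n * ((δ^2 - 1) * ρ * v i) := by
      have hba : b - a ≤ c^n * ((δ^2 - 1) * ρ) := by
        refine le_trans hcn ?_
        have hd1 : (0:ℝ) ≤ δ^2 - 1 := by nlinarith
        have hpw : (0:ℝ) ≤ c^n := pow_nonneg hc0 n
        nlinarith [mul_le_mul_of_nonneg_left haρ hd1]
      nlinarith [hvpos i, pow_nonneg hc0 n, mul_le_mul_of_nonneg_right hba (hvpos i).le]
    rw [abs_sub_le_iff]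
    exact ⟨le_trans h1 h3, le_trans h2 h3⟩
  have hlim : Tendsto (fun n => c^n * ((δ^2 - 1) * ρ * v i)) atTop (nhds 0) := by
    simpa using (tendsto_pow_atTop_nhds_zero_of_lt_one hc0 hc1).mul_const ((δ^2 - 1) * ρ * v i)
  have h0 : |u i - ρ * v i| ≤ 0 := ge_of_tendsto' hlim key
  have h0' : u i - ρ * v i = 0 := abs_eq_zero.mp (le_antisymm h0 (abs_nonneg _))
  linarith
end

section
/- Let ℬ be a collection of subsets of a set Y satisfying: (1) Y ∈ ℬ; (2) for each A ∈ ℬ, the complement Y \ A is a finite union of elements of ℬ; (3) any two elements of ℬ are disjoint or nested. Then the collection of finite unions of elements of ℬ is an algebra of sets on Y, and each of its members is a finite disjoint union of elements of ℬ. -/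
open Classical in
theorem aux_inter {Y : Type*} (B : Set (Set Y))
    (hnest : ∀ A ∈ B, ∀ C ∈ B, Disjoint A C ∨ A ⊆ C ∨ C ⊆ A)
    {A C : Set Y}
    (hA : ∃ S : Finset (Set Y), ↑S ⊆ B ∧ A = ⋃₀ ↑S)
    (hC : ∃ S : Finset (Set Y), ↑S ⊆ B ∧ C = ⋃₀ ↑S) :
    ∃ S : Finset (Set Y), ↑S ⊆ B ∧ A ∩ C = ⋃₀ ↑S := by
  obtain ⟨S, hS, rfl⟩ := hA
  obtain ⟨T, hT, rfl⟩ := hC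
  refine ⟨((S ×ˢ T).filter (fun p => (p.1 ∩ p.2).Nonempty)).image
    (fun p => p.1 ∩ p.2), ?_, ?_⟩
  · intro x hx
    simp only [Finset.coe_image, Set.mem_image, Finset.mem_coe,
      Finset.mem_filter, Finset.mem_product] at hx
    obtain ⟨⟨a, c⟩, ⟨⟨ha, hc⟩, hne⟩, rfl⟩ := hx
    rcases hnest a (hS ha) c (hT hc) with h | h | h
    · exact absurd (Set.disjoint_iff_inter_eq_empty.mp h)
        (Set.nonempty_iff_ne_empty.mp hne)
    · rw [Set.inter_eq_left.mpr h]; exact hS ha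
    · rw [Set.inter_eq_right.mpr h]; exact hT hc
  · ext x
    simp only [Set.mem_inter_iff, Set.mem_sUnion, Finset.mem_coe,
      Finset.coe_image, Set.mem_image, Finset.mem_filter, Finset.mem_product]
    constructor
    · rintro ⟨⟨a, ha, hxa⟩, ⟨c, hc, hxc⟩⟩
      exact ⟨a ∩ c, ⟨(a, c), ⟨⟨ha, hc⟩, ⟨x, hxa, hxc⟩⟩, rfl⟩, hxa, hxc⟩
    · rintro ⟨t, ⟨⟨a, c⟩, ⟨⟨ha, hc⟩, _⟩, rfl⟩, hxa, hxc⟩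
      exact ⟨⟨a, ha, hxa⟩, ⟨c, hc, hxc⟩⟩

theorem finite_unions_of_tree_basis_form_algebra {Y : Type*}
    (B : Set (Set Y)) (huniv : Set.univ ∈ B)
    (hcompl : ∀ A ∈ B, ∃ S : Finset (Set Y), ↑S ⊆ B ∧ Aᶜ = ⋃₀ ↑S)
    (hnest : ∀ A ∈ B, ∀ C ∈ B, Disjoint A C ∨ A ⊆ C ∨ C ⊆ A) :
    (∅ ∈ {A : Set Y | ∃ S : Finset (Set Y), ↑S ⊆ B ∧ A = ⋃₀ ↑S}) ∧
    (∀ A ∈ {A : Set Y | ∃ S : Finset (Set Y), ↑S ⊆ B ∧ A = ⋃₀ ↑S},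
      Aᶜ ∈ {A : Set Y | ∃ S : Finset (Set Y), ↑S ⊆ B ∧ A = ⋃₀ ↑S}) ∧
    (∀ A ∈ {A : Set Y | ∃ S : Finset (Set Y), ↑S ⊆ B ∧ A = ⋃₀ ↑S},
      ∀ C ∈ {A : Set Y | ∃ S : Finset (Set Y), ↑S ⊆ B ∧ A = ⋃₀ ↑S},
        A ∪ C ∈ {A : Set Y | ∃ S : Finset (Set Y), ↑S ⊆ B ∧ A = ⋃₀ ↑S}) ∧
    (∀ A ∈ {A : Set Y | ∃ S : Finset (Set Y), ↑S ⊆ B ∧ A = ⋃₀ ↑S},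
      ∃ S : Finset (Set Y), ↑S ⊆ B ∧
        (↑S : Set (Set Y)).Pairwise Disjoint ∧ A = ⋃₀ ↑S) := by
  classical
  refine ⟨⟨∅, by simp⟩, ?_, ?_, ?_⟩
  · -- complements
    rintro A ⟨S, hS, rfl⟩
    induction S using Finset.induction_on with
    | empty => exact ⟨{Set.univ}, by simpa using huniv, by simp⟩
    | @insert A' S hanotmem ih =>
      have hA' : (A' : Set Y) ∈ B := hS (by simp)
      have hS' : ↑S ⊆ B := fun x hx => hS (by simp [hx])
      have h1 : ∃ T : Finset (Set Y), ↑T ⊆ B ∧ A'ᶜ = ⋃₀ ↑T := hcompl A' hA'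
      have h2 := ih hS'
      have : (⋃₀ ↑(insert A' S) : Set Y)ᶜ = A'ᶜ ∩ (⋃₀ (↑S : Set (Set Y)))ᶜ := by
        simp [Set.compl_union]
      rw [this]
      exact aux_inter B hnest h1 h2
  · rintro A ⟨S, hS, rfl⟩ C ⟨T, hT, rfl⟩
    refine ⟨S ∪ T, by simp [Finset.coe_union, Set.union_subset hS hT], ?_⟩
    simp [Finset.coe_union, Set.sUnion_union]
  · rintro A ⟨S, hS, rfl⟩
    refine ⟨S.filter (fun a => ∀ c ∈ S, a ⊆ c → a = c), ?_, ?_, ?_⟩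
    · intro x hx
      simp only [Finset.coe_filter, Set.mem_setOf_eq] at hx
      exact hS hx.1
    · intro a ha c hc hac
      simp only [Finset.coe_filter, Set.mem_setOf_eq] at ha hc
      rcases hnest a (hS ha.1) c (hS hc.1) with h | h | h
      · exact h
      · exact absurd (ha.2 c hc.1 h) hac
      · exact absurd (hc.2 a ha.1 h).symm hac
    · apply subset_antisymm
      · intro x hx
        obtain ⟨a, ha, hxa⟩ := hx
        obtain ⟨b, hb, hmax⟩ := Set.Finite.exists_maximalFor id
          {c ∈ (S : Set (Set Y)) | a ⊆ c} (S.finite_toSet.subset (fun c hc => hc.1))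
          ⟨a, ha, subset_rfl⟩
        refine ⟨b, ?_, hb.2 hxa⟩
        simp only [Finset.coe_filter, Set.mem_setOf_eq, Finset.mem_coe] at *
        exact ⟨hb.1, fun c hc hbc => subset_antisymm hbc (hmax ⟨hc, hb.2.trans hbc⟩ hbc)⟩
      · exact Set.sUnion_subset_sUnion (by intro x hx; simp only [Finset.coe_filter, Set.mem_setOf_eq] at hx; exact hx.1)
end
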